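/- Fix an integer k ≥ 1 and a real q > (k+1)/(2k−1). For each n, let μ_n = μ_{n,p_n} be the Erdős–Rényi measure with p_n = n^{−q}, and let N_n(ω) = |{x̄ ∈ ET_{k,k}(G_ω) : ∂_{k,k}(x̄) = 0}| be the number of eulerian k-trails of length k in G_ω with vanishing differential; equivalently, N_n(ω) is the number of injective (k+1)-tuples (x_0,…,x_k) of vertices of G_ω with x_i adjacent to x_{i+1} for all 0 ≤ i ≤ k−1 and x_{i−1} adjacent to x_{i+1} for all 1 ≤ i ≤ k−1. Then the expectation E_{μ_n}[N_n] tends to 0 as n → ∞. -/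

import Mathlib

open scoped Classical

variable {V : Type*}

/-- Length of the walk described by a list of landmarks: sum of path-metric
distances between consecutive entries (`⊤`-valued if some pair is unreachable). -/
noncomputable def mlen (G : SimpleGraph V) : List V → ℕ∞
  | [] => 0
  | [_] => 0
  | a :: b :: t => G.edist a b + mlen G (b :: t)

/-- A list of landmarks is a trail if consecutive entries are distinct and reachable. -/
def IsTrailList (G : SimpleGraph V) (l : List V) : Prop :=
  l.Chain' fun a b => a ≠ b ∧ G.Reachable a b

/-- `trails G k ℓ` is the set `T_{k,ℓ}(G)` of `k`-trails of length `ℓ`,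
encoded as lists with `k+1` entries. -/
def trails (G : SimpleGraph V) (k ℓ : ℕ) : Set (List V) :=
  {l | l.length = k + 1 ∧ IsTrailList G l ∧ mlen G l = (ℓ : ℕ∞)}

/-- `etrails G k ℓ` is the set `ET_{k,ℓ}(G)` of eulerian `k`-trails of length `ℓ`. -/
def etrails (G : SimpleGraph V) (k ℓ : ℕ) : Set (List V) :=
  {l | l ∈ trails G k ℓ ∧ l.Nodup}

/-- Boundary of a single generator: `∂_{·,ℓ}(x₀,…,x_k) = Σ_{i=1}^{k-1} (-1)^i ∂^i`,
where `∂^i` deletes the `i`-th landmark if this does not change the length. -/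
noncomputable def bdryElt (G : SimpleGraph V) (ℓ : ℕ) (l : List V) : List V →₀ ℤ :=
  ∑ i ∈ Finset.Ioo 0 (l.length - 1),
    if mlen G (l.eraseIdx i) = (ℓ : ℕ∞) then ((-1 : ℤ) ^ i) • Finsupp.single (l.eraseIdx i) 1
    else 0

/-- The magnitude differential (length parameter `ℓ`) on the ambient free abelian group
on all landmark lists.  Its restriction to `MC_{k,ℓ}(G)` (chains supported on
`trails G k ℓ`) is `∂_{k,ℓ}`. -/
noncomputable def bdry (G : SimpleGraph V) (ℓ : ℕ) : (List V →₀ ℤ) →ₗ[ℤ] (List V →₀ ℤ) :=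
  Finsupp.lsum ℤ fun l => LinearMap.toSpanSingleton ℤ _ (bdryElt G ℓ l)

/-- `MC_{k,ℓ}(G)`: the free abelian group on `T_{k,ℓ}(G)`, realized as the submodule of
finitely supported `ℤ`-valued functions supported on trails. -/
noncomputable def MC (G : SimpleGraph V) (k ℓ : ℕ) : Submodule ℤ (List V →₀ ℤ) :=
  Finsupp.supported ℤ ℤ (trails G k ℓ)

/-- `EMC_{k,ℓ}(G)`: the free abelian group on `ET_{k,ℓ}(G)`. -/
noncomputable def EMC (G : SimpleGraph V) (k ℓ : ℕ) : Submodule ℤ (List V →₀ ℤ) :=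
  Finsupp.supported ℤ ℤ (etrails G k ℓ)

/-- `EMH_{k,k}(G) = ker(∂_{k,k}|_{EMC_{k,k}(G)})`, the first-diagonal eulerian magnitude
homology group (`EMC_{k+1,k}(G) = 0`, so homology is just the kernel). -/
noncomputable def EMHkk (G : SimpleGraph V) (k : ℕ) : Submodule ℤ (List V →₀ ℤ) :=
  EMC G k k ⊓ LinearMap.ker (bdry G k)

/-- `MH_{k,k}(G) = ker(∂_{k,k}|_{MC_{k,k}(G)})`. -/
noncomputable def MHkk (G : SimpleGraph V) (k : ℕ) : Submodule ℤ (List V →₀ ℤ) :=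
  MC G k k ⊓ LinearMap.ker (bdry G k)

/-- `β_{k,k}(G)`, the rank of `EMH_{k,k}(G)`. -/
noncomputable def emBetti (G : SimpleGraph V) (k : ℕ) : ℕ :=
  Module.finrank ℤ (EMHkk G k)

/-- `c(G,H)`: the number of vertex subsets of `G` whose induced subgraph is isomorphic
to `H`. -/
noncomputable def subgraphCount (G : SimpleGraph V) {W : Type*} (H : SimpleGraph W) : ℕ :=
  Set.ncard {s : Set V | Nonempty ((G.induce s) ≃g H)}

open MeasureTheory
open scoped ENNReal

/-- The Erdős–Rényi measure `μ_{n,p}` on `Ω_n`, the space of `{0,1}`-labellings of the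
(unordered) pairs of vertices of `{1,…,n}`: each coordinate is an independent
Bernoulli(`p`) variable. -/
noncomputable def erMeasure (n : ℕ) (p : ℝ≥0∞) (hp : p ≤ 1) :
    Measure (Sym2 (Fin n) → Bool) :=
  Measure.pi fun _ => (PMF.bernoulli p.toNNReal (by simpa using ENNReal.toNNReal_mono ENNReal.one_ne_top hp)).toMeasure

/-- The simple graph `G_ω` determined by `ω ∈ Ω_n`: distinct `u, v` are adjacent iff
`ω({u,v}) = 1`. -/
def erGraph {n : ℕ} (ω : Sym2 (Fin n) → Bool) : SimpleGraph (Fin n) :=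
  SimpleGraph.fromRel fun u v => ω s(u, v) = true

/-- The number of eulerian `k`-trails of length `k` in `G` with vanishing differential. -/
noncomputable def emZeroDiffCount {V' : Type*} (G : SimpleGraph V') (k : ℕ) : ℕ :=
  Set.ncard {l : List V' | l ∈ etrails G k k ∧ bdry G k (Finsupp.single l 1) = 0}

lemma q_pos_of_gt {k : ℕ} (hk : 1 ≤ k) {q : ℝ}
    (hq : ((k : ℝ) + 1) / (2 * (k : ℝ) - 1) < q) : 0 < q := by
  have hk' : (1 : ℝ) ≤ (k : ℝ) := by exact_mod_cast hk
  have h : 0 < ((k : ℝ) + 1) / (2 * (k : ℝ) - 1) := div_pos (by linarith) (by linarith)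
  linarith

lemma ofReal_rpow_neg_le_one (n : ℕ) {q : ℝ} (hq : 0 < q) :
    ENNReal.ofReal ((n : ℝ) ^ (-q)) ≤ 1 := by
  rcases Nat.eq_zero_or_pos n with rfl | hn
  · simp [Real.zero_rpow (neg_ne_zero.mpr hq.ne')]
  · exact ENNReal.ofReal_le_one.mpr
      (Real.rpow_le_one_of_one_le_of_nonpos (by exact_mod_cast hn) (by linarith))

/-! ### Auxiliary lemmas -/

section Aux

variable {G : SimpleGraph V}

lemma mlen_cons_cons (G : SimpleGraph V) (a b : V) (t : List V) :
    mlen G (a :: b :: t) = G.edist a b + mlen G (b :: t) := rfl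

lemma mlen_append (xs : List V) (y : V) (ys : List V) :
    mlen G (xs ++ y :: ys) = mlen G (xs ++ [y]) + mlen G (y :: ys) := by
  induction xs with
  | nil => cases ys <;> simp [mlen]
  | cons a xs ih =>
    cases xs with
    | nil => cases ys <;> simp [mlen]
    | cons b xs' =>
      simp only [List.cons_append, mlen_cons_cons] at *
      rw [ih, add_assoc]

lemma one_le_edist {a b : V} (hne : a ≠ b) : 1 ≤ G.edist a b :=
  ENat.one_le_iff_ne_zero.mpr (fun h => hne (SimpleGraph.edist_eq_zero_iff.mp h))

lemma length_le_mlen : ∀ {l : List V}, IsTrailList G l → (l.length : ℕ∞) ≤ mlen G l + 1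
  | [] , _ => by simp [mlen]
  | [_], _ => by simp [mlen]
  | a :: b :: t, h => by
    rw [IsTrailList, List.Chain', List.isChain_cons_cons] at h
    have h1 : 1 ≤ G.edist a b := one_le_edist h.1.1
    have h2 := length_le_mlen (l := b :: t) h.2
    rw [mlen_cons_cons]
    calc ((a :: b :: t).length : ℕ∞) = 1 + (b :: t).length := by
          push_cast [List.length_cons]; ring
    _ ≤ G.edist a b + (mlen G (b :: t) + 1) := add_le_add h1 h2
    _ = G.edist a b + mlen G (b :: t) + 1 := by rw [add_assoc]

lemma chain_adj_of_mlen : ∀ {l : List V}, IsTrailList G l →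
    mlen G l + 1 = (l.length : ℕ∞) → l.Chain' G.Adj
  | [], _, _ => List.isChain_nil
  | [_], _, _ => List.isChain_singleton _
  | a :: b :: t, h, hm => by
    rw [IsTrailList, List.Chain', List.isChain_cons_cons] at h
    have h1 : 1 ≤ G.edist a b := one_le_edist h.1.1
    have h2 := length_le_mlen (l := b :: t) h.2
    rw [mlen_cons_cons] at hm
    have hd : G.edist a b + (mlen G (b :: t) + 1) = (((b :: t).length : ℕ∞) + 1) := by
      rw [show ((b :: t).length : ℕ∞) + 1 = ((a :: b :: t).length : ℕ∞) by
            push_cast [List.length_cons]; ring, ← hm]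
      ring
    have hne : G.edist a b + (mlen G (b :: t) + 1) ≠ ⊤ := by
      rw [hd]
      have : ((b :: t).length : ℕ∞) + 1 = (((b :: t).length + 1 : ℕ) : ℕ∞) := by push_cast; ring
      rw [this]; exact ENat.coe_ne_top _
    have hd_ne : G.edist a b ≠ ⊤ := fun ht => hne (by simp [ht])
    have hm_ne : mlen G (b :: t) ≠ ⊤ := fun ht => hne (by simp [ht])
    lift G.edist a b to ℕ using hd_ne with d hd'
    lift mlen G (b :: t) to ℕ using hm_ne with m hm'
    have e1 : 1 ≤ d := by exact_mod_cast h1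
    have e2 : (b :: t).length ≤ m + 1 := by exact_mod_cast h2
    have e3 : d + (m + 1) = (b :: t).length + 1 := by exact_mod_cast hd
    have ed : d = 1 := by omega
    have em : m + 1 = (b :: t).length := by omega
    rw [List.Chain', List.isChain_cons_cons]
    refine ⟨SimpleGraph.edist_eq_one_iff_adj.mp (by rw [← hd', ed]; norm_num), ?_⟩
    exact chain_adj_of_mlen h.2 (by rw [← hm']; exact_mod_cast em)

lemma bdry_single (ℓ : ℕ) (l : List V) :
    bdry G ℓ (Finsupp.single l 1) = bdryElt G ℓ l := by
  rw [bdry, Finsupp.lsum_single, LinearMap.toSpanSingleton_apply, one_smul]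

lemma eraseIdx_ne_eraseIdx {l : List V} (hl : l.Nodup) {i j : ℕ} (hij : i < j)
    (hj : j < l.length) : l.eraseIdx i ≠ l.eraseIdx j := by
  intro h
  have hi1 : i < (l.eraseIdx i).length := by
    rw [List.length_eraseIdx_of_lt (by omega)]; omega
  have hi2 : i < (l.eraseIdx j).length := by
    rw [List.length_eraseIdx_of_lt hj]; omega
  have e1 : (l.eraseIdx i)[i] = l[i+1]'(by omega) := by
    rw [List.getElem_eraseIdx]; simp
  have e2 : (l.eraseIdx j)[i] = l[i]'(by omega) := by
    rw [List.getElem_eraseIdx]; simp [hij]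
  have h3 := List.getElem_of_eq h hi1
  rw [e1] at h3
  rw [e2] at h3
  have := List.Nodup.getElem_inj_iff hl |>.mp h3
  omega

lemma mlen_eraseIdx_ne {l : List V} (hl : l.Nodup) {k : ℕ} (hlen : l.length = k + 1)
    (h : bdryElt G k l = 0) {i : ℕ} (hi : 0 < i) (hik : i < k) :
    mlen G (l.eraseIdx i) ≠ (k : ℕ∞) := by
  intro hmi
  have h2 := DFunLike.congr_fun h (l.eraseIdx i)
  rw [bdryElt, Finsupp.finset_sum_apply] at h2
  rw [Finset.sum_eq_single i] at h2
  · rw [if_pos hmi, Finsupp.smul_apply, Finsupp.single_apply, if_pos rfl] at h2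
    simpa using h2
  · intro j hj hji
    rw [Finset.mem_Ioo] at hj
    have hne : l.eraseIdx j ≠ l.eraseIdx i := by
      rcases Nat.lt_or_ge j i with hc | hc
      · exact eraseIdx_ne_eraseIdx hl hc (by omega)
      · exact fun he => (eraseIdx_ne_eraseIdx hl (show i < j by omega) (by omega)) he.symm
    split
    · rw [Finsupp.smul_apply, Finsupp.single_apply, if_neg hne, smul_zero]
    · rfl
  · intro hni
    exact absurd (Finset.mem_Ioo.mpr ⟨hi, by omega⟩) hni

lemma skip_adj {l : List V} (hl : l.Nodup) (hchain : l.Chain' G.Adj) {k j : ℕ}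
    (hlen : l.length = k + 1) (hml : mlen G l = (k : ℕ∞)) (hjk : j + 1 < k)
    (hne : mlen G (l.eraseIdx (j+1)) ≠ (k : ℕ∞)) :
    G.Adj (l[j]'(by omega)) (l[j+2]'(by omega)) := by
  have hj2 : j + 2 < l.length := by omega
  have hj1 : j + 1 < l.length := by omega
  have hj0 : j < l.length := by omega
  set a := l[j]'hj0 with ha
  set b := l[j+1]'hj1 with hb
  set c := l[j+2]'hj2 with hc
  have hdec : l = l.take j ++ a :: b :: c :: l.drop (j+3) := by
    conv_lhs => rw [← List.take_append_drop j l]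
    rw [List.drop_eq_getElem_cons hj0, List.drop_eq_getElem_cons hj1,
      List.drop_eq_getElem_cons hj2]
  have herase : l.eraseIdx (j+1) = l.take j ++ a :: c :: l.drop (j+3) := by
    rw [List.eraseIdx_eq_take_drop_succ, List.take_succ, List.getElem?_eq_getElem hj0,
      List.drop_eq_getElem_cons hj2]
    rw [show (some (l[j]'hj0)).toList = [a] from rfl, List.append_assoc, List.singleton_append]
  rw [List.Chain', List.isChain_iff_getElem] at hchain
  have hab : G.Adj a b := by
    have := hchain j (by omega)
    simpa [List.get_eq_getElem, ha, hb] using this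
  have hbc : G.Adj b c := by
    have := hchain (j+1) (by omega)
    simpa [List.get_eq_getElem, hb, hc] using this
  have dab : G.edist a b = 1 := SimpleGraph.edist_eq_one_iff_adj.mpr hab
  have dbc : G.edist b c = 1 := SimpleGraph.edist_eq_one_iff_adj.mpr hbc
  by_contra hnadj
  have hac : a ≠ c := by
    intro he
    have := List.Nodup.getElem_inj_iff hl |>.mp (ha ▸ hc ▸ he)
    omega
  have dle : G.edist a c ≤ 2 := by
    calc G.edist a c ≤ G.edist a b + G.edist b c := SimpleGraph.edist_triangle
    _ = 2 := by rw [dab, dbc]; norm_num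
  have dne1 : G.edist a c ≠ 1 := fun h1 => hnadj (SimpleGraph.edist_eq_one_iff_adj.mp h1)
  have dne0 : G.edist a c ≠ 0 := fun h0 => hac (SimpleGraph.edist_eq_zero_iff.mp h0)
  have dtop : G.edist a c ≠ ⊤ := fun ht => by rw [ht] at dle; exact absurd dle (by simp)
  have dac : G.edist a c = 2 := by
    lift G.edist a c to ℕ using dtop with d hd
    have e2' : d ≤ 2 := by exact_mod_cast dle
    have e1' : d ≠ 1 := by exact_mod_cast dne1
    have e0' : d ≠ 0 := by exact_mod_cast dne0
    have : d = 2 := by omega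
    exact_mod_cast this
  apply hne
  have e1 : mlen G l = mlen G (l.take j ++ [a])
      + (G.edist a b + (G.edist b c + mlen G (c :: l.drop (j+3)))) := by
    conv_lhs => rw [hdec]
    rw [mlen_append, mlen_cons_cons, mlen_cons_cons]
  have e2 : mlen G (l.eraseIdx (j+1)) = mlen G (l.take j ++ [a])
      + (G.edist a c + mlen G (c :: l.drop (j+3))) := by
    rw [herase, mlen_append, mlen_cons_cons]
  rw [e2, dac, ← hml, e1, dab, dbc]
  ring

end Aux

section Count

noncomputable def prx (n k : ℕ) (x : Fin (k+1) → Fin n) : ℕ → Fin n :=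
  fun m => x ⟨min m k, Nat.lt_succ_of_le (Nat.min_le_right m k)⟩

lemma prx_eq {n k : ℕ} (x : Fin (k+1) → Fin n) {m : ℕ} (hm : m ≤ k) :
    prx n k x m = x ⟨m, by omega⟩ := by
  simp [prx, Nat.min_eq_left hm]

lemma prx_inj {n k : ℕ} {x : Fin (k+1) → Fin n} (hx : Function.Injective x)
    {a b : ℕ} (ha : a ≤ k) (hb : b ≤ k) (h : prx n k x a = prx n k x b) : a = b := by
  rw [prx_eq x ha, prx_eq x hb] at h
  simpa using congrArg Fin.val (hx h)

noncomputable def pairsOf (n k : ℕ) (x : Fin (k+1) → Fin n) : Finset (Sym2 (Fin n)) :=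
  (Finset.range (2*k-1)).image fun j =>
    if j < k then s(prx n k x j, prx n k x (j+1)) else s(prx n k x (j-k), prx n k x (j-k+2))

lemma pairsOf_card {n k : ℕ} (hk : 1 ≤ k) {x : Fin (k+1) → Fin n}
    (hx : Function.Injective x) : (pairsOf n k x).card = 2*k-1 := by
  rw [pairsOf, Finset.card_image_of_injOn, Finset.card_range]
  intro j1 h1 j2 h2 he
  simp only [Finset.coe_range, Set.mem_Iio] at h1 h2
  dsimp only at he
  split_ifs at he with c1 c2 c2 <;>
  · rw [Sym2.eq_iff] at he
    rcases he with ⟨ea, eb⟩ | ⟨ea, eb⟩ <;>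
    · have ea' := prx_inj hx (by omega) (by omega) ea
      have eb' := prx_inj hx (by omega) (by omega) eb
      omega

lemma erGraph_adj {n : ℕ} (ω : Sym2 (Fin n) → Bool) {u v : Fin n}
    (h : (erGraph ω).Adj u v) : ω s(u,v) = true := by
  rw [erGraph, SimpleGraph.fromRel_adj] at h
  rcases h.2 with h2 | h2
  · exact h2
  · rwa [Sym2.eq_swap]

lemma count_le_card {n k : ℕ} (hk : 1 ≤ k) (ω : Sym2 (Fin n) → Bool) :
    emZeroDiffCount (erGraph ω) k ≤
      (Finset.univ.filter (fun x : Fin (k+1) → Fin n =>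
        Function.Injective x ∧ ∀ e ∈ pairsOf n k x, ω e = true)).card := by
  classical
  unfold emZeroDiffCount
  set G := erGraph ω with hG
  set P := fun x : Fin (k+1) → Fin n =>
    Function.Injective x ∧ ∀ e ∈ pairsOf n k x, ω e = true with hP
  have hsub : {l : List (Fin n) | l ∈ etrails G k k ∧ bdry G k (Finsupp.single l 1) = 0}
      ⊆ ↑((Finset.univ.filter P).image (fun x => List.ofFn x)) := by
    intro l hl
    obtain ⟨⟨⟨hlen, htrail, hml⟩, hnd⟩, hb⟩ := hl
    set x : Fin (k+1) → Fin n := fun i => l.get (Fin.cast hlen.symm i) with hx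
    have hofn : List.ofFn x = l := by
      apply List.ext_getElem
      · simp [hlen]
      · intro i h1 h2
        rw [List.getElem_ofFn]
        simp [hx, List.get_eq_getElem]
    have hxinj : Function.Injective x :=
      (List.nodup_iff_injective_get.mp hnd).comp (Fin.cast_injective _)
    have hchain : l.Chain' G.Adj := by
      apply chain_adj_of_mlen htrail
      rw [hml, hlen]; push_cast; ring
    have hskip : ∀ (j : ℕ) (_hj : j + 1 < k),
        G.Adj (l[j]'(by omega)) (l[j+2]'(by omega)) := by
      intro j hj
      apply skip_adj hnd hchain hlen hml hj
      exact mlen_eraseIdx_ne hnd hlen (by rw [← bdry_single]; exact hb) (by omega) (by omega)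
    have hchain' := List.isChain_iff_getElem.mp hchain
    have hprx : ∀ m : ℕ, m ≤ k → ∀ hm : m < l.length, prx n k x m = l[m]'hm := by
      intro m hm hml'
      rw [prx_eq x hm]
      simp [hx, List.get_eq_getElem]
    have hPx : P x := by
      refine ⟨hxinj, ?_⟩
      intro e he
      rw [pairsOf, Finset.mem_image] at he
      obtain ⟨j, hj, rfl⟩ := he
      rw [Finset.mem_range] at hj
      split_ifs with hc
      · rw [hprx j (by omega) (by omega), hprx (j+1) (by omega) (by omega)]
        apply erGraph_adj
        have := hchain' j (by rw [hlen]; omega)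
        simpa [List.get_eq_getElem] using this
      · rw [hprx (j-k) (by omega) (by omega), hprx (j-k+2) (by omega) (by omega)]
        apply erGraph_adj
        have := hskip (j-k) (by omega)
        exact this
    rw [Finset.coe_image]
    exact ⟨x, by simpa using hPx, hofn⟩
  calc Set.ncard {l : List (Fin n) | l ∈ etrails G k k ∧ bdry G k (Finsupp.single l 1) = 0}
      ≤ ((Finset.univ.filter P).image (fun x => List.ofFn x)).card := by
        rw [← Set.ncard_coe_finset]
        exact Set.ncard_le_ncard hsub (Finset.finite_toSet _)
  _ ≤ (Finset.univ.filter P).card := Finset.card_image_le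

end Count

section Measure

open MeasureTheory
open scoped ENNReal

lemma measurable_event {n : ℕ} (F : Finset (Sym2 (Fin n))) :
    MeasurableSet {ω : Sym2 (Fin n) → Bool | ∀ e ∈ F, ω e = true} := by
  have : {ω : Sym2 (Fin n) → Bool | ∀ e ∈ F, ω e = true}
      = ⋂ e ∈ F, (fun ω : Sym2 (Fin n) → Bool => ω e) ⁻¹' {true} := by
    ext ω; simp
  rw [this]
  exact MeasurableSet.biInter (F : Set (Sym2 (Fin n))).to_countable fun e _ =>
    (measurable_pi_apply e) (measurableSet_singleton true)

lemma erMeasure_event {n : ℕ} (p : ℝ≥0∞) (hp : p ≤ 1) (F : Finset (Sym2 (Fin n))) :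
    erMeasure n p hp {ω | ∀ e ∈ F, ω e = true} = p ^ F.card := by
  classical
  have hset : {ω : Sym2 (Fin n) → Bool | ∀ e ∈ F, ω e = true}
      = Set.pi Set.univ (fun e => if e ∈ F then {true} else Set.univ) := by
    ext ω
    simp only [Set.mem_setOf_eq, Set.mem_pi, Set.mem_univ, forall_true_left]
    constructor
    · intro h e
      split_ifs with he
      · simpa using h e he
      · trivial
    · intro h e he
      have := h e
      rw [if_pos he] at this
      simpa using this
  rw [erMeasure, hset, MeasureTheory.Measure.pi_pi]
  have hval : ∀ e : Sym2 (Fin n),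
      (PMF.bernoulli p.toNNReal (by simpa using ENNReal.toNNReal_mono ENNReal.one_ne_top hp)).toMeasure (if e ∈ F then ({true} : Set Bool) else Set.univ)
      = if e ∈ F then p else 1 := by
    intro e
    split_ifs
    · rw [PMF.toMeasure_apply_singleton _ _ (measurableSet_singleton true)]
      refine (PMF.bernoulli_apply _ true).trans ?_
      simp [ENNReal.coe_toNNReal (ne_top_of_le_ne_top ENNReal.one_ne_top hp)]
    · simp only [MeasureTheory.measure_univ]
  simp_rw [hval]
  rw [Finset.prod_ite_mem, Finset.univ_inter, Finset.prod_const]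

lemma lintegral_bound (n k : ℕ) (hk : 1 ≤ k) (p : ℝ≥0∞) (hp : p ≤ 1) :
    ∫⁻ ω, (emZeroDiffCount (erGraph ω) k : ℝ≥0∞) ∂ erMeasure n p hp
      ≤ (n : ℝ≥0∞)^(k+1) * p^(2*k-1) := by
  classical
  set S : (Fin (k+1) → Fin n) → Set (Sym2 (Fin n) → Bool) := fun x =>
    {ω | Function.Injective x ∧ ∀ e ∈ pairsOf n k x, ω e = true} with hS
  have hmeas : ∀ x, MeasurableSet (S x) := by
    intro x
    by_cases hx : Function.Injective x
    · have : S x = {ω | ∀ e ∈ pairsOf n k x, ω e = true} := by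
        ext ω; simp [hS, hx]
      rw [this]; exact measurable_event _
    · have : S x = ∅ := by ext ω; simp [hS, hx]
      rw [this]; exact MeasurableSet.empty
  have hpt : ∀ ω, (emZeroDiffCount (erGraph ω) k : ℝ≥0∞)
      ≤ ∑ x : Fin (k+1) → Fin n, (S x).indicator (fun _ => 1) ω := by
    intro ω
    have h2 : (∑ x : Fin (k+1) → Fin n, (S x).indicator (fun _ => (1:ℝ≥0∞)) ω)
        = ((Finset.univ.filter (fun x : Fin (k+1) → Fin n =>
            Function.Injective x ∧ ∀ e ∈ pairsOf n k x, ω e = true)).card : ℝ≥0∞) := by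
      rw [← Finset.sum_boole]
      apply Finset.sum_congr rfl
      intro x _
      rw [Set.indicator_apply]
      congr 1
    rw [h2]
    exact_mod_cast count_le_card hk ω
  calc ∫⁻ ω, (emZeroDiffCount (erGraph ω) k : ℝ≥0∞) ∂ erMeasure n p hp
      ≤ ∫⁻ ω, ∑ x : Fin (k+1) → Fin n, (S x).indicator (fun _ => 1) ω ∂ erMeasure n p hp :=
        MeasureTheory.lintegral_mono hpt
  _ = ∑ x : Fin (k+1) → Fin n, ∫⁻ ω, (S x).indicator (fun _ => 1) ω ∂ erMeasure n p hp :=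
        MeasureTheory.lintegral_finset_sum _ fun x _ =>
          (measurable_const.indicator (hmeas x))
  _ = ∑ x : Fin (k+1) → Fin n, erMeasure n p hp (S x) := by
        apply Finset.sum_congr rfl
        intro x _
        rw [MeasureTheory.lintegral_indicator (hmeas x), MeasureTheory.setLIntegral_one]
  _ ≤ ∑ _x : Fin (k+1) → Fin n, p^(2*k-1) := by
        apply Finset.sum_le_sum
        intro x _
        by_cases hx : Function.Injective x
        · have : S x = {ω | ∀ e ∈ pairsOf n k x, ω e = true} := by
            ext ω; simp [hS, hx]
          rw [this, erMeasure_event, pairsOf_card hk hx]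
        · have : S x = ∅ := by ext ω; simp [hS, hx]
          rw [this]; simp
  _ = (n : ℝ≥0∞)^(k+1) * p^(2*k-1) := by
        rw [Finset.sum_const, Finset.card_univ]
        rw [nsmul_eq_mul]
        congr 1
        rw [Fintype.card_fun]
        push_cast
        simp

end Measure


/-- Lemma 4.3: fix `k ≥ 1` and `q > (k+1)/(2k-1)`.  For `p_n = n^{-q}`,
the expected number of eulerian `k`-trails of length `k` with vanishing differential in
`G(n, p_n)` tends to `0` as `n → ∞`. -/
theorem er_expected_zero_diff_trails_tendsto_zero (k : ℕ) (hk : 1 ≤ k) (q : ℝ)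
    (hq : ((k : ℝ) + 1) / (2 * (k : ℝ) - 1) < q) :
    Filter.Tendsto
      (fun n : ℕ => ∫⁻ ω, (emZeroDiffCount (erGraph ω) k : ℝ≥0∞)
        ∂ erMeasure n (ENNReal.ofReal ((n : ℝ) ^ (-q)))
            (ofReal_rpow_neg_le_one n (q_pos_of_gt hk hq)))
      Filter.atTop (nhds 0) := by
  classical
  have hk' : (1:ℝ) ≤ (k:ℝ) := by exact_mod_cast hk
  have hq0 : 0 < q := q_pos_of_gt hk hq
  have h2k : (0:ℝ) < 2*(k:ℝ) - 1 := by linarith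
  set c : ℝ := (k:ℝ) + 1 - q * (2*(k:ℝ) - 1) with hcdef
  have hc : c < 0 := by
    have := (div_lt_iff₀ h2k).mp hq
    rw [hcdef]; linarith
  have hg : Filter.Tendsto (fun n : ℕ => ENNReal.ofReal ((n:ℝ) ^ c)) Filter.atTop (nhds 0) := by
    have h1 : Filter.Tendsto (fun x : ℝ => x ^ c) Filter.atTop (nhds 0) := by
      have h := tendsto_rpow_neg_atTop (by linarith : (0:ℝ) < -c)
      simpa using h
    have h2 := h1.comp (tendsto_natCast_atTop_atTop (R := ℝ))
    have h3 := ENNReal.tendsto_ofReal h2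
    simpa using h3
  have hH : Filter.Tendsto (fun n : ℕ => (n : ℝ≥0∞)^(k+1)
      * (ENNReal.ofReal ((n:ℝ) ^ (-q)))^(2*k-1)) Filter.atTop (nhds 0) := by
    apply hg.congr'
    filter_upwards [Filter.eventually_ge_atTop 1] with n hn
    have hn0 : (0:ℝ) < n := by exact_mod_cast hn
    have e1 : ((n:ℝ≥0∞))^(k+1) = ENNReal.ofReal ((n:ℝ)^(k+1)) := by
      rw [ENNReal.ofReal_pow hn0.le, ENNReal.ofReal_natCast]
    have e2 : (ENNReal.ofReal ((n:ℝ) ^ (-q)))^(2*k-1)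
        = ENNReal.ofReal (((n:ℝ) ^ (-q))^(2*k-1)) := by
      rw [ENNReal.ofReal_pow (Real.rpow_nonneg hn0.le _)]
    rw [e1, e2, ← ENNReal.ofReal_mul (by positivity)]
    congr 1
    rw [← Real.rpow_natCast ((n:ℝ)) (k+1), ← Real.rpow_natCast ((n:ℝ) ^ (-q)) (2*k-1),
      ← Real.rpow_mul hn0.le, ← Real.rpow_add hn0]
    congr 1
    rw [hcdef]
    push_cast [Nat.cast_sub (by omega : 1 ≤ 2*k)]
    ring
  refine tendsto_of_tendsto_of_tendsto_of_le_of_le tendsto_const_nhds hH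
    (fun n => zero_le) (fun n => ?_)
  exact lintegral_bound n k hk _ (ofReal_rpow_neg_le_one n hq0)
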